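/- A row stochastic matrix P_{Z|X} with input alphabet 𝒳, |𝒳| = q, and output alphabet 𝒴 satisfies the Doeblin minorization condition with parameter η ∈ (0,1) (i.e., there exists a probability distribution Q_Z on 𝒴 such that P_{Z|X}(z|x) ≥ η·Q_Z(z) for all x, z) if and only if P_{Z|X} is a degraded version of the q-ary erasure channel with erasure probability η. -/

import Mathlib

/-- A channel (row stochastic matrix) has nonnegative entries and rows summing to 1. -/
def RowStochastic {X Z : Type*} [Fintype Z] (A : X → Z → ℝ) : Prop :=
  (∀ x z, 0 ≤ A x z) ∧ ∀ x, ∑ z, A x z = 1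

/-- The q-ary erasure channel with erasure probability `η`: input alphabet `X`, output
alphabet `Option X` where `none` is the erasure symbol. -/
noncomputable def erasureCh (X : Type*) [DecidableEq X] (η : ℝ) : X → Option X → ℝ :=
  fun x z => match z with
  | some y => if y = x then 1 - η else 0
  | none => η

/-- Doeblin minorization is equivalent to degradation by an erasure channel: a row
stochastic matrix `P` satisfies `Doeblin(Q_Z, η)` for some distribution `Q_Z` and
`η ∈ (0,1)` if and only if `P` is a degraded version of the q-ary erasure channel with
erasure probability `η`. -/
theorem doeblin_iff_degraded_erasure {X Y : Type*} [Fintype X] [Fintype Y] [DecidableEq X]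
    (P : X → Y → ℝ) (hP : RowStochastic P) (η : ℝ) (hη0 : 0 < η) (hη1 : η < 1) :
    (∃ Q : Y → ℝ, (∀ z, 0 ≤ Q z) ∧ (∑ z, Q z = 1) ∧ ∀ x z, η * Q z ≤ P x z) ↔
    (∃ W : Option X → Y → ℝ, RowStochastic W ∧
      ∀ x z, P x z = ∑ u, erasureCh X η x u * W u z) := by
  have h1η : (0:ℝ) < 1 - η := by linarith
  constructor
  · rintro ⟨Q, hQ0, hQ1, hQP⟩
    refine ⟨fun u z => match u with
      | none => Q z
      | some x => (P x z - η * Q z) / (1 - η), ⟨?_, ?_⟩, ?_⟩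
    · rintro (_|x) z
      · exact hQ0 z
      · exact div_nonneg (by linarith [hQP x z]) h1η.le
    · rintro (_|x)
      · exact hQ1
      · simp only
        rw [← Finset.sum_div, div_eq_one_iff_eq h1η.ne']
        rw [Finset.sum_sub_distrib, hP.2 x, ← Finset.mul_sum, hQ1]
        ring
    · intro x z
      rw [Fintype.sum_option]
      simp only [erasureCh]
      simp only [ite_mul, zero_mul, Finset.sum_ite_eq', Finset.mem_univ, if_true]
      field_simp
      ring
  · rintro ⟨W, ⟨hW0, hW1⟩, hWP⟩
    refine ⟨fun z => W none z, fun z => hW0 none z, hW1 none, ?_⟩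
    intro x z
    rw [hWP x z, Fintype.sum_option]
    simp only [erasureCh]
    simp only [ite_mul, zero_mul, Finset.sum_ite_eq', Finset.mem_univ, if_true]
    nlinarith [hW0 (some x) z]
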